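/- Let G be a finite connected graph with transition matrix P for simple random walk. Then τ(G) = (∏_{x∈V(G)} deg_G(x) / ∑_{x∈V(G)} deg_G(x)) · det'(I - P), where det' denotes the product of the nonzero eigenvalues. -/

import Mathlib

set_option linter.unusedSectionVars false

open Filter Finset Topology

/-- The relation on vertices generated by the edges in `T`. -/
def treeRel {V E : Type*} (ends : E → Sym2 V) (T : Finset E) (x y : V) : Prop :=
  ∃ e ∈ T, ends e = s(x, y)

/-- `T` is a spanning tree of the multigraph with edge-endpoint map `ends`. -/
def IsSpanningTree {V E : Type*} [Fintype V] (ends : E → Sym2 V) (T : Finset E) : Prop :=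
  T.card + 1 = Fintype.card V ∧ ∀ x y : V, Relation.ReflTransGen (treeRel ends T) x y

/-- The complexity (number of spanning trees) of the multigraph. -/
noncomputable def treeCount {V E : Type*} [Fintype V] [Fintype E] (ends : E → Sym2 V) : ℕ :=
  Nat.card {T : Finset E // IsSpanningTree ends T}

/-- The degree of a vertex in a multigraph (loops count twice). -/
noncomputable def mdeg {V E : Type*} [Fintype E] [DecidableEq V] (ends : E → Sym2 V) (x : V) :
    ℕ :=
  ∑ e : E, (if ends e = s(x, x) then 2 else if x ∈ ends e then 1 else 0)

/-- The transition matrix of simple random walk on the multigraph. -/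
noncomputable def transMat {V E : Type*} [Fintype V] [Fintype E] [DecidableEq V]
    (ends : E → Sym2 V) : Matrix V V ℝ :=
  Matrix.of fun x y =>
    (∑ e : E, if ends e = s(x, y) then (if x = y then (2 : ℝ) else 1) else 0) / (mdeg ends x)

/-- `det'`: the product of the nonzero (complex) eigenvalues of a real matrix,
with multiplicity. -/
noncomputable def detPrime {V : Type*} [Fintype V] [DecidableEq V] (M : Matrix V V ℝ) : ℂ :=
  (((M.map (Complex.ofReal)).charpoly.roots).filter (· ≠ 0)).prod

/-! ### Auxiliary material -/

section Aux

open Matrix Polynomial Equiv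

variable {V E : Type*} [Fintype V] [Fintype E] [DecidableEq V] [DecidableEq E]

/-- Signed incidence matrix of the multigraph, with an arbitrary orientation. -/
noncomputable def Bm (ends : E → Sym2 V) : Matrix V E ℝ :=
  Matrix.of fun x e =>
    (if x = (ends e).out.1 then (1 : ℝ) else 0) - (if x = (ends e).out.2 then 1 else 0)

lemma sym2_out_spec {V : Type*} (z : Sym2 V) : z = s(z.out.1, z.out.2) := by
  exact (Quot.out_eq z).symm

lemma sum_mul_Bm (ends : E → Sym2 V) (G : V → ℝ) (e : E) :
    ∑ x : V, G x * Bm ends x e = G (ends e).out.1 - G (ends e).out.2 := by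
  simp only [Bm, Matrix.of_apply, mul_sub, mul_ite, mul_one, mul_zero]
  rw [Finset.sum_sub_distrib]
  simp [Finset.sum_ite_eq, Finset.sum_ite_eq']

lemma Bm_colsum (ends : E → Sym2 V) (e : E) : ∑ x : V, Bm ends x e = 0 := by
  have := sum_mul_Bm ends (fun _ => 1) e
  simpa using this

lemma Bm_tri (ends : E → Sym2 V) (x : V) (e : E) :
    Bm ends x e = 0 ∨ Bm ends x e = 1 ∨ Bm ends x e = -1 := by
  simp only [Bm, Matrix.of_apply]
  split_ifs <;> norm_num

lemma Bm_supp (ends : E → Sym2 V) (x : V) (e : E) (h : Bm ends x e ≠ 0) :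
    x = (ends e).out.1 ∨ x = (ends e).out.2 := by
  by_contra hc
  push_neg at hc
  exact h (by simp [Bm, hc.1, hc.2])

lemma Bm_loop (ends : E → Sym2 V) (x : V) (e : E) (h : (ends e).out.1 = (ends e).out.2) :
    Bm ends x e = 0 := by
  simp [Bm, h]

lemma Bm_vals (ends : E → Sym2 V) (e : E) (h : (ends e).out.1 ≠ (ends e).out.2) :
    Bm ends (ends e).out.1 e = 1 ∧ Bm ends (ends e).out.2 e = -1 := by
  constructor <;> simp [Bm, h, Ne.symm h]

/-- Per-edge identity for the Laplacian `B * Bᵀ`. -/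
lemma Bm_edge (ends : E → Sym2 V) (e : E) (x y : V) :
    Bm ends x e * Bm ends y e =
      (if x = y then (if ends e = s(x, x) then (2 : ℝ) else if x ∈ ends e then 1 else 0) else 0)
        - (if ends e = s(x, y) then (if x = y then (2 : ℝ) else 1) else 0) := by
  obtain ⟨a, b, hab⟩ : ∃ a b, (ends e).out = (a, b) := ⟨_, _, rfl⟩
  have hz : ends e = s(a, b) := by rw [sym2_out_spec (ends e), hab]
  simp only [Bm, Matrix.of_apply, hab, hz, Sym2.eq_iff, Sym2.mem_iff]
  by_cases hxy : x = y <;> by_cases hxa : x = a <;> by_cases hxb : x = b <;>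
      by_cases hya : y = a <;> by_cases hyb : y = b <;>
    simp_all <;> aesop

lemma Lmat_apply (ends : E → Sym2 V) (x y : V) :
    (Bm ends * (Bm ends)ᵀ) x y =
      (if x = y then (mdeg ends x : ℝ) else 0)
        - ∑ e : E, (if ends e = s(x, y) then (if x = y then (2 : ℝ) else 1) else 0) := by
  rw [Matrix.mul_apply]
  simp only [Matrix.transpose_apply]
  rw [Finset.sum_congr rfl (fun e _ => Bm_edge ends e x y), Finset.sum_sub_distrib]
  congr 1
  by_cases hxy : x = y
  · subst hxy
    rw [if_pos rfl, mdeg]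
    push_cast
    exact Finset.sum_congr rfl fun e _ => by rw [if_pos rfl]
  · simp [hxy]

lemma oneSubP (ends : E → Sym2 V) (hdeg : ∀ x : V, 0 < mdeg ends x) :
    1 - transMat ends =
      Matrix.of fun x y => ((mdeg ends x : ℝ))⁻¹ * (Bm ends * (Bm ends)ᵀ) x y := by
  ext x y
  have hd : (mdeg ends x : ℝ) ≠ 0 := Nat.cast_ne_zero.mpr (hdeg x).ne'
  simp only [Matrix.sub_apply, Matrix.one_apply, transMat, Matrix.of_apply, Lmat_apply]
  rw [mul_sub]
  split_ifs with h
  · field_simp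
  · field_simp; ring

lemma rowsum_L (ends : E → Sym2 V) (x : V) : ∑ y : V, (Bm ends * (Bm ends)ᵀ) x y = 0 := by
  simp only [Matrix.mul_apply, Matrix.transpose_apply]
  rw [Finset.sum_comm]
  refine Finset.sum_eq_zero fun e _ => ?_
  rw [← Finset.mul_sum, Bm_colsum, mul_zero]

/-- `G` is constant on connected components of the subgraph with edges `T`. -/
lemma const_of (ends : E → Sym2 V) (T : Finset E) (G : V → ℝ)
    (hG : ∀ e ∈ T, G (ends e).out.1 = G (ends e).out.2) :
    ∀ {x y : V}, Relation.ReflTransGen (treeRel ends T) x y → G x = G y := by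
  intro x y h
  induction h with
  | refl => rfl
  | @tail b c _ hbc ih =>
    obtain ⟨e, he, hends⟩ := hbc
    have hGe := hG e he
    have h2 : s((ends e).out.1, (ends e).out.2) = s(b, c) := by
      rw [← sym2_out_spec, hends]
    rcases Sym2.eq_iff.mp h2 with ⟨h3, h4⟩ | ⟨h3, h4⟩
    · rw [ih, ← h3, ← h4]; exact hGe
    · rw [ih, ← h4, ← h3]; exact hGe.symm

lemma treeRel_symm (ends : E → Sym2 V) (T : Finset E) : Symmetric (treeRel ends T) := by
  rintro x y ⟨e, he, h⟩
  exact ⟨e, he, by rw [h, Sym2.eq_swap]⟩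

/-! ### Cofactors -/

variable {n : Type*} [Fintype n] [DecidableEq n] {R : Type*} [CommRing R]

/-- The `(i,i)` cofactor of a matrix. -/
noncomputable def cof (A : Matrix n n R) (i : n) : R := det (A.updateRow i (Pi.single i 1))

lemma cof_eq_sum (A : Matrix n n R) (i : n) :
    cof A i = ∑ σ : Equiv.Perm n,
      if σ i = i then ((Equiv.Perm.sign σ : ℤ) : R) * ∏ j ∈ univ.erase i, A (σ j) j else 0 := by
  rw [cof, Matrix.det_apply']
  refine Finset.sum_congr rfl fun σ _ => ?_
  by_cases hσ : σ i = i
  · rw [if_pos hσ]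
    congr 1
    rw [← Finset.mul_prod_erase univ _ (Finset.mem_univ i)]
    rw [show (A.updateRow i (Pi.single i 1)) (σ i) i = 1 by
      rw [hσ]; simp [Matrix.updateRow_apply]]
    rw [one_mul]
    refine Finset.prod_congr rfl fun j hj => ?_
    have hji : j ≠ i := (Finset.mem_erase.mp hj).1
    have hσj : σ j ≠ i := fun hc => hji (σ.injective (hc.trans hσ.symm))
    rw [Matrix.updateRow_apply, if_neg hσj]
  · rw [if_neg hσ]
    have hne : σ.symm i ≠ i := fun h => hσ (by conv_lhs => rw [← h, Equiv.apply_symm_apply])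
    refine mul_eq_zero_of_right _ ?_
    refine Finset.prod_eq_zero (Finset.mem_univ (σ.symm i)) ?_
    rw [Equiv.apply_symm_apply, Matrix.updateRow_apply, if_pos rfl,
      Pi.single_eq_of_ne hne]

lemma coeff_one_prod {α : Type*} [DecidableEq α] (s : Finset α) (f : α → R[X]) :
    (∏ j ∈ s, f j).coeff 1 = ∑ j ∈ s, (f j).coeff 1 * ∏ k ∈ s.erase j, (f k).coeff 0 := by
  classical
  induction s using Finset.induction with
  | empty => simp [Polynomial.coeff_one]
  | @insert a t ha ih =>
    rw [Finset.prod_insert ha]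
    have hmul : ∀ p q : R[X], (p * q).coeff 1 = p.coeff 0 * q.coeff 1 + p.coeff 1 * q.coeff 0 := by
      intro p q
      rw [Polynomial.coeff_mul]
      rw [show Finset.HasAntidiagonal.antidiagonal 1 = {(0, 1), (1, 0)} from rfl]
      simp [Finset.sum_insert, Finset.mem_singleton]
    rw [hmul, ih, Finset.sum_insert ha, Finset.erase_insert ha, Finset.mul_sum]
    have hc0 : ∀ u : Finset α, (∏ j ∈ u, f j).coeff 0 = ∏ j ∈ u, (f j).coeff 0 := by
      intro u
      simp only [Polynomial.coeff_zero_eq_eval_zero, Polynomial.eval_prod]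
    rw [hc0]
    rw [add_comm]
    congr 1
    refine Finset.sum_congr rfl fun j hj => ?_
    have hja : j ≠ a := fun h => ha (h ▸ hj)
    rw [Finset.erase_insert_of_ne hja.symm, Finset.prod_insert (fun hc => ha (Finset.mem_of_mem_erase hc))]
    ring

lemma charpoly_coeff_one (M : Matrix n n R) :
    (charpoly M).coeff 1 = ∑ i : n, cof (-M) i := by
  classical
  rw [Matrix.charpoly, Matrix.det_apply', Polynomial.finset_sum_coeff]
  have key : ∀ σ : Equiv.Perm n,
      (((Equiv.Perm.sign σ : ℤ) : R[X]) * ∏ j : n, Matrix.charmatrix M (σ j) j).coeff 1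
        = ∑ j : n, (if σ j = j then ((Equiv.Perm.sign σ : ℤ) : R) * ∏ k ∈ univ.erase j, (-M) (σ k) k else 0) := by
    intro σ
    have hc : ((Equiv.Perm.sign σ : ℤ) : R[X]) = Polynomial.C ((Equiv.Perm.sign σ : ℤ) : R) := by
      simp
    rw [hc, Polynomial.coeff_C_mul, coeff_one_prod, Finset.mul_sum]
    refine Finset.sum_congr rfl fun j _ => ?_
    have hc0 : ∀ k : n, (Matrix.charmatrix M (σ k) k).coeff 0 = (-M) (σ k) k := by
      intro k
      by_cases hk : σ k = k
      · rw [hk, Matrix.charmatrix_apply_eq]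
        simp
      · rw [Matrix.charmatrix_apply_ne _ _ _ hk]
        simp
    have hc1 : (Matrix.charmatrix M (σ j) j).coeff 1 = if σ j = j then 1 else 0 := by
      by_cases hj : σ j = j
      · rw [hj, if_pos rfl, Matrix.charmatrix_apply_eq]
        simp
      · rw [if_neg hj, Matrix.charmatrix_apply_ne _ _ _ hj]
        simp
    rw [hc1]
    rw [Finset.prod_congr rfl fun k _ => hc0 k]
    split_ifs <;> ring
  rw [Finset.sum_congr rfl fun σ _ => key σ, Finset.sum_comm]
  refine Finset.sum_congr rfl fun j _ => ?_
  rw [cof_eq_sum]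

lemma cof_smul_rows (w : n → R) (A : Matrix n n R) (i : n) :
    cof (Matrix.of fun x y => w x * A x y) i = (∏ j ∈ univ.erase i, w j) * cof A i := by
  unfold cof
  have hupd : (Matrix.of fun x y => w x * A x y).updateRow i (Pi.single i 1)
      = Matrix.of fun x y =>
          (if x = i then 1 else w x) * (A.updateRow i (Pi.single i 1)) x y := by
    ext x y
    by_cases hx : x = i <;> simp [Matrix.updateRow_apply, hx]
  rw [hupd, Matrix.det_mul_column]
  congr 1
  rw [← Finset.mul_prod_erase univ (fun x => if x = i then 1 else w x) (Finset.mem_univ i),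
    if_pos rfl, one_mul]
  exact Finset.prod_congr rfl fun j hj => if_neg (Finset.mem_erase.mp hj).1

lemma cof_neg (A : Matrix n n R) (i : n) :
    cof (-A) i = (-1 : R) ^ (Fintype.card n - 1) * cof A i := by
  have h : -A = Matrix.of fun x y => (-1 : R) * A x y := by
    ext x y
    simp
  rw [h, cof_smul_rows]
  congr 1
  rw [Finset.prod_const, Finset.card_erase_of_mem (Finset.mem_univ i), Finset.card_univ]

lemma cof_eq_det_minor (A : Matrix n n R) (v : n) :
    cof A v = det (A.submatrix (Subtype.val : {x : n // x ≠ v} → n) Subtype.val) := by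
  classical
  let e : {x : n // x ≠ v} ⊕ {x : n // ¬x ≠ v} ≃ n := Equiv.sumCompl _
  have h1 : cof A v = det ((A.updateRow v (Pi.single v 1)).submatrix e e) :=
    (Matrix.det_submatrix_equiv_self e _).symm
  have h2 : (A.updateRow v (Pi.single v 1)).submatrix e e
      = Matrix.fromBlocks (A.submatrix Subtype.val Subtype.val)
          (Matrix.of fun i (_ : {x : n // ¬x ≠ v}) => A i.1 v) 0 1 := by
    ext i j
    cases i with
    | inl i =>
      cases j with
      | inl j =>
        simp [e, Matrix.updateRow_apply, i.2]
      | inr j =>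
        have hj : j.1 = v := not_not.mp j.2
        simp [e, Matrix.updateRow_apply, i.2, hj]
    | inr i =>
      have hi : i.1 = v := not_not.mp i.2
      cases j with
      | inl j =>
        simp [e, Matrix.updateRow_apply, hi, Pi.single_eq_of_ne j.2]
      | inr j =>
        have hj : j.1 = v := not_not.mp j.2
        have hij : i = j := Subtype.ext (hi.trans hj.symm)
        simp [e, Matrix.updateRow_apply, hi, hj, hij, Matrix.one_apply]
  rw [h1, h2, Matrix.det_fromBlocks_zero₂₁, Matrix.det_one, mul_one]

/-! ### Cauchy–Binet -/

/-- A chosen enumeration of a finset of the right size. -/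
noncomputable def selF {ι γ : Type*} [Fintype ι] (S : Finset γ)
    (h : S.card = Fintype.card ι) : ι → γ :=
  fun i => ((S.equivFinOfCardEq h).symm (Fintype.equivFin ι i) : γ)

lemma selF_mem {ι γ : Type*} [Fintype ι] (S : Finset γ) (h : S.card = Fintype.card ι) (i : ι) :
    selF S h i ∈ S :=
  ((S.equivFinOfCardEq h).symm (Fintype.equivFin ι i)).2

lemma selF_inj {ι γ : Type*} [Fintype ι] (S : Finset γ) (h : S.card = Fintype.card ι) :
    Function.Injective (selF S h) := by
  intro a b hab
  have := Subtype.coe_injective hab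
  simpa using congrArg (fun z => (Fintype.equivFin ι).symm ((S.equivFinOfCardEq h) z)) this

lemma selF_surj {ι γ : Type*} [Fintype ι] (S : Finset γ) (h : S.card = Fintype.card ι)
    {e : γ} (he : e ∈ S) : ∃ i, selF S h i = e := by
  refine ⟨(Fintype.equivFin ι).symm ((S.equivFinOfCardEq h) ⟨e, he⟩), ?_⟩
  simp [selF]

lemma fiber_sum {ι γ : Type*} [Fintype ι] [Fintype γ] [DecidableEq ι] [DecidableEq γ]
    (S : Finset γ) (h : S.card = Fintype.card ι) (T : (ι → γ) → R) :
    ∑ f ∈ univ.filter (fun f : ι → γ => Finset.image f univ = S), T f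
      = ∑ σ : Equiv.Perm ι, T (selF S h ∘ σ) := by
  classical
  have pf : ∀ σ : Equiv.Perm ι, Finset.image (selF S h ∘ σ) univ = S := by
    intro σ
    ext x
    constructor
    · intro hx
      obtain ⟨i, _, rfl⟩ := Finset.mem_image.mp hx
      exact selF_mem S h (σ i)
    · intro hx
      obtain ⟨i, hi⟩ := selF_surj S h hx
      exact Finset.mem_image.mpr ⟨σ.symm i, Finset.mem_univ _, by
        simpa [Equiv.apply_symm_apply] using hi⟩
  have hEbij : Function.Bijective (fun σ : Equiv.Perm ι =>
      (⟨selF S h ∘ σ, pf σ⟩ : {f : ι → γ // Finset.image f univ = S})) := by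
    constructor
    · intro σ₁ σ₂ h12
      have : selF S h ∘ σ₁ = selF S h ∘ σ₂ := congrArg Subtype.val h12
      ext i
      exact selF_inj S h (congrFun this i)
    · rintro ⟨f, hf⟩
      have hfinj : Function.Injective f := by
        have hcard : (Finset.image f univ).card = (univ : Finset ι).card := by
          rw [hf, Finset.card_univ, h]
      -- injectivity from card of image
        have := Finset.card_image_iff.mp hcard
        rw [Finset.coe_univ] at this
        exact Set.injOn_univ.mp this
      have hmem : ∀ i : ι, f i ∈ S := by
        intro i
        rw [← hf]
        exact Finset.mem_image_of_mem f (Finset.mem_univ i)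
      let F : ι → ι := fun i =>
        (Fintype.equivFin ι).symm ((S.equivFinOfCardEq h) ⟨f i, hmem i⟩)
      have hFinj : Function.Injective F := by
        intro a b hab
        have := (Fintype.equivFin ι).symm.injective hab
        have := (S.equivFinOfCardEq h).injective this
        exact hfinj (congrArg Subtype.val this)
      have hFbij : Function.Bijective F := (Finite.injective_iff_bijective).mp hFinj
      refine ⟨Equiv.ofBijective F hFbij, ?_⟩
      refine Subtype.ext ?_
      funext i
      show selF S h (F i) = f i
      simp [selF, F]
  calc ∑ f ∈ univ.filter (fun f : ι → γ => Finset.image f univ = S), T f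
      = ∑ f : {f : ι → γ // Finset.image f univ = S}, T f.1 := by
        refine Finset.sum_subtype _ (fun f => ?_) T
        simp
    _ = ∑ σ : Equiv.Perm ι, T (selF S h ∘ σ) := by
        rw [← Function.Bijective.sum_comp hEbij (fun u => T u.1)]

theorem cauchy_binet {ι γ : Type*} [Fintype ι] [Fintype γ] [DecidableEq ι] [DecidableEq γ]
    (M : Matrix ι γ R) (N : Matrix γ ι R) :
    det (M * N) = ∑ S : Finset γ,
      if h : S.card = Fintype.card ι then
        det (M.submatrix id (selF S h)) * det (N.submatrix (selF S h) id) else 0 := by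
  classical
  -- Step 1: expand the determinant of the product over all column choices.
  have step1 : det (M * N) = ∑ f : ι → γ, (∏ i, N (f i) i) * det (M.submatrix id f) := by
    rw [Matrix.det_apply']
    have h1 : ∀ σ : Perm ι, (∏ i, (M * N) (σ i) i)
        = ∑ f ∈ Fintype.piFinset (fun _ : ι => (univ : Finset γ)),
            ∏ i, M (σ i) (f i) * N (f i) i := by
      intro σ
      simp only [Matrix.mul_apply]
      rw [Finset.prod_univ_sum]
    simp only [h1, Fintype.piFinset_univ, Finset.mul_sum]
    rw [Finset.sum_comm]
    refine Finset.sum_congr rfl fun f _ => ?_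
    rw [Matrix.det_apply', Finset.mul_sum]
    refine Finset.sum_congr rfl fun σ _ => ?_
    rw [Finset.prod_mul_distrib]
    simp only [Matrix.submatrix_apply, id_eq]
    ring
  rw [step1]
  -- Step 2: group by image.
  rw [← Finset.sum_fiberwise univ (fun f : ι → γ => Finset.image f univ)
      (fun f => (∏ i, N (f i) i) * det (M.submatrix id f))]
  refine Finset.sum_congr rfl fun S _ => ?_
  by_cases h : S.card = Fintype.card ι
  · rw [dif_pos h]
    rw [fiber_sum S h]
    rw [Matrix.det_apply' (N.submatrix (selF S h) id), Finset.mul_sum]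
    refine Finset.sum_congr rfl fun σ _ => ?_
    have hsub : M.submatrix id (selF S h ∘ σ) = (M.submatrix id (selF S h)).submatrix id σ := by
      rw [Matrix.submatrix_submatrix]
      rfl
    rw [hsub, Matrix.det_permute']
    simp only [Matrix.submatrix_apply, id_eq, Function.comp_apply]
    push_cast
    ring
  · rw [dif_neg h]
    refine Finset.sum_eq_zero fun f hf => ?_
    have hfS : Finset.image f univ = S := (Finset.mem_filter.mp hf).2
    by_cases hinj : Function.Injective f
    · exact absurd (by rw [← hfS, Finset.card_image_of_injective _ hinj, Finset.card_univ])
        h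
    · obtain ⟨a, b, hab, hne⟩ := Function.not_injective_iff.mp hinj
      have : det (M.submatrix id f) = 0 := by
        refine Matrix.det_zero_of_column_eq hne fun k => ?_
        simp [Matrix.submatrix_apply, hab]
      rw [this, mul_zero]


lemma det_eq_zero_of_vecMul_eq_zero {ι : Type*} [Fintype ι] [DecidableEq ι]
    {M : Matrix ι ι ℝ} (g : ι → ℝ) (hg : g ≠ 0) (h : Matrix.vecMul g M = 0) :
    det M = 0 := by
  rw [← Matrix.det_transpose]
  exact Matrix.exists_mulVec_eq_zero_iff.mp ⟨g, hg, by rw [Matrix.mulVec_transpose, h]⟩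

/-- Total unimodularity of the incidence matrix. -/
lemma tu (ends : E → Sym2 V) : ∀ (k : ℕ) (r : Fin k → V) (c : Fin k → E),
    Function.Injective r →
    det ((Bm ends).submatrix r c) = 0 ∨ det ((Bm ends).submatrix r c) = 1 ∨
      det ((Bm ends).submatrix r c) = -1 := by
  intro k
  induction k with
  | zero =>
    intro r c _
    right; left
    exact Matrix.det_fin_zero
  | succ k ih =>
    intro r c hr
    by_cases h0 : ∃ j, ∀ i, (Bm ends).submatrix r c i j = 0
    · obtain ⟨j, hj⟩ := h0
      left
      exact Matrix.det_eq_zero_of_column_eq_zero j hj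
    by_cases h1 : ∃ j i, ∀ i', (Bm ends).submatrix r c i' j ≠ 0 → i' = i
    · obtain ⟨j, i, hji⟩ := h1
      rw [Matrix.det_succ_column _ j, Finset.sum_eq_single i]
      · have hA := Bm_tri ends (r i) (c j)
        have hm := ih (r ∘ Fin.succAbove i) (c ∘ Fin.succAbove j)
          (hr.comp (Fin.succAbove_right_injective))
        rw [Matrix.submatrix_submatrix]
        have hsign : ((-1 : ℝ) ^ ((i : ℕ) + (j : ℕ)) = 1 ∨ (-1 : ℝ) ^ ((i : ℕ) + (j : ℕ)) = -1) :=
          (Nat.even_or_odd _).imp (fun h => h.neg_one_pow) (fun h => h.neg_one_pow)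
        simp only [Matrix.submatrix_apply]
        rcases hsign with h|h <;> rw [h] <;> rcases hA with h2|h2|h2 <;> rw [h2] <;>
          rcases hm with h3|h3|h3 <;> rw [h3] <;> norm_num
      · intro i' _ hne
        have hz : (Bm ends).submatrix r c i' j = 0 := by
          by_contra hc
          exact hne (hji i' hc)
        rw [hz]
        ring
      · intro habs
        exact absurd (Finset.mem_univ i) habs
    · left
      push_neg at h0 h1
      refine det_eq_zero_of_vecMul_eq_zero (fun _ => 1) ?_ ?_
      · intro hc
        have := congrFun hc 0
        norm_num at this
      · funext j
        obtain ⟨i₁, hi₁⟩ := h0 j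
        obtain ⟨i₂, hi₂, hne⟩ := h1 j i₁
        have hab : (ends (c j)).out.1 ≠ (ends (c j)).out.2 := by
          intro hcon
          exact hi₁ (by
            simp only [Matrix.submatrix_apply]
            exact Bm_loop ends _ _ hcon)
        have hmem : ∀ i', (Bm ends).submatrix r c i' j ≠ 0 →
            r i' = (ends (c j)).out.1 ∨ r i' = (ends (c j)).out.2 := fun i' hi' =>
          Bm_supp ends _ _ hi'
        have hsum : ∀ u w : Fin (k+1), u ≠ w → r u = (ends (c j)).out.1 →
            r w = (ends (c j)).out.2 → ∑ i, (Bm ends).submatrix r c i j = 0 := by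
          intro u w huw hu hw
          rw [← Finset.sum_subset (Finset.subset_univ {u, w})]
          · rw [Finset.sum_pair huw]
            simp only [Matrix.submatrix_apply, hu, hw]
            rw [(Bm_vals ends (c j) hab).1, (Bm_vals ends (c j) hab).2]
            ring
          · intro i _ hi
            simp only [Finset.mem_insert, Finset.mem_singleton] at hi
            push_neg at hi
            by_contra hc
            rcases hmem i hc with hh|hh
            · exact hi.1 (hr (hh.trans hu.symm))
            · exact hi.2 (hr (hh.trans hw.symm))
        have hcol : ∑ i, (Bm ends).submatrix r c i j = 0 := by
          rcases hmem i₁ hi₁ with h₁|h₁ <;> rcases hmem i₂ hi₂ with h₂|h₂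
          · exact absurd (hr (h₁.trans h₂.symm)).symm hne
          · exact hsum i₁ i₂ (Ne.symm hne) h₁ h₂
          · exact hsum i₂ i₁ hne h₂ h₁
          · exact absurd (hr (h₁.trans h₂.symm)).symm hne
        simp only [Matrix.vecMul, dotProduct, one_mul, Pi.zero_apply]
        exact hcol

/-- Extension of a vector on `V \ {v}` by zero. -/
noncomputable def Gv (v : V) (g : {x : V // x ≠ v} → ℝ) : V → ℝ :=
  fun x => if h : x = v then 0 else g ⟨x, h⟩

lemma Gext_sum (ends : E → Sym2 V) (v : V) (g : {x : V // x ≠ v} → ℝ) (e : E) :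
    ∑ i : {x : V // x ≠ v}, g i * Bm ends i.1 e
      = Gv v g (ends e).out.1 - Gv v g (ends e).out.2 := by
  rw [← sum_mul_Bm ends (Gv v g) e]
  rw [← Finset.sum_erase_add univ _ (Finset.mem_univ v)]
  rw [show Gv v g v * Bm ends v e = 0 by simp [Gv]]
  rw [add_zero]
  rw [Finset.sum_subtype (univ.erase v) (p := fun x => x ≠ v)
    (fun x => by simp [Finset.mem_erase]) (fun x => Gv v g x * Bm ends x e)]
  refine Finset.sum_congr rfl fun i _ => ?_
  congr 1
  simp [Gv, i.2]


lemma card_ne (v : V) : Fintype.card {x : V // x ≠ v} = Fintype.card V - 1 := by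
  have := Fintype.card_subtype_compl (fun x : V => x = v)
  simpa [Fintype.card_subtype_eq] using this

/-- Classification: the squared minor of the incidence matrix indexed by an
edge set of the right cardinality is the indicator of being a spanning tree. -/
lemma det_sq_tree (ends : E → Sym2 V) [DecidablePred (IsSpanningTree ends)] (v : V) (S : Finset E)
    (h : S.card = Fintype.card {x : V // x ≠ v}) :
    (det ((Bm ends).submatrix (Subtype.val : {x : V // x ≠ v} → V) (selF S h)))^2
      = if IsSpanningTree ends S then 1 else 0 := by
  classical
  set M := (Bm ends).submatrix (Subtype.val : {x : V // x ≠ v} → V) (selF S h) with hMdef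
  by_cases hTree : IsSpanningTree ends S
  · rw [if_pos hTree]
    have hne : det M ≠ 0 := by
      intro h0
      have h0T : det Mᵀ = 0 := by rw [Matrix.det_transpose]; exact h0
      obtain ⟨g, hg, hMg⟩ := Matrix.exists_mulVec_eq_zero_iff.mpr h0T
      have hvec : Matrix.vecMul g M = 0 := by rw [← Matrix.mulVec_transpose]; exact hMg
      have hcols : ∀ e ∈ S, Gv v g (ends e).out.1 = Gv v g (ends e).out.2 := by
        intro e he
        obtain ⟨jj, hjj⟩ := selF_surj S h he
        have hcol := congrFun hvec jj
        simp only [Matrix.vecMul, dotProduct, Pi.zero_apply, hMdef,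
          Matrix.submatrix_apply] at hcol
        rw [hjj] at hcol
        rw [Gext_sum ends v g e] at hcol
        linarith
      have hconst : ∀ x y : V, Relation.ReflTransGen (treeRel ends S) x y →
          Gv v g x = Gv v g y := fun x y hxy => const_of ends S (Gv v g) hcols hxy
      apply hg
      funext i
      have h1 : Gv v g i.1 = 0 := by
        rw [hconst _ _ (hTree.2 i.1 v)]
        simp [Gv]
      simpa [Gv, i.2] using h1
    have htri : det M = 0 ∨ det M = 1 ∨ det M = -1 := by
      have eqv : Fin (Fintype.card {x : V // x ≠ v}) ≃ {x : V // x ≠ v} :=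
        (Fintype.equivFin _).symm
      have htu := tu ends _ (Subtype.val ∘ eqv) (selF S h ∘ eqv)
        (Subtype.coe_injective.comp eqv.injective)
      have hsub : (Bm ends).submatrix (Subtype.val ∘ eqv) (selF S h ∘ eqv)
          = M.submatrix eqv eqv := by
        rw [hMdef, Matrix.submatrix_submatrix]
      rw [hsub, Matrix.det_submatrix_equiv_self] at htu
      exact htu
    rcases htri with h'|h'|h'
    · exact absurd h' hne
    · rw [h']; norm_num
    · rw [h']; norm_num
  · rw [if_neg hTree]
    have hNE : Nonempty V := ⟨v⟩
    have hcard : S.card + 1 = Fintype.card V := by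
      rw [h, card_ne v]
      exact Nat.succ_pred_eq_of_pos Fintype.card_pos
    have hnc : ¬∀ x y : V, Relation.ReflTransGen (treeRel ends S) x y := fun hc =>
      hTree ⟨hcard, hc⟩
    have hsym : Symmetric (Relation.ReflTransGen (treeRel ends S)) :=
      by haveI : Std.Symm (treeRel ends S) := ⟨treeRel_symm ends S⟩; exact fun _ _ hab => Std.Symm.symm _ _ hab
    obtain ⟨x₀, hx₀⟩ : ∃ x₀, ¬ Relation.ReflTransGen (treeRel ends S) v x₀ := by
      by_contra hc
      push_neg at hc
      exact hnc fun x y => (hsym (hc x)).trans (hc y)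
    have hx₀v : x₀ ≠ v := fun hh => hx₀ (hh ▸ Relation.ReflTransGen.refl)
    set g : {x : V // x ≠ v} → ℝ :=
      fun i => if Relation.ReflTransGen (treeRel ends S) x₀ i.1 then 1 else 0 with hgdef
    have hGv : Gv v g = fun x => if Relation.ReflTransGen (treeRel ends S) x₀ x then 1 else 0 := by
      funext x
      by_cases hx : x = v
      · subst hx
        rw [show Gv x g x = 0 by simp [Gv]]
        rw [if_neg (fun hrr => hx₀ (hsym hrr))]
      · simp [Gv, hx, hgdef]
    have hvec : Matrix.vecMul g M = 0 := by
      funext j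
      simp only [Matrix.vecMul, dotProduct, Pi.zero_apply, hMdef,
        Matrix.submatrix_apply]
      rw [Gext_sum ends v g (selF S h j), hGv]
      have hS : selF S h j ∈ S := selF_mem S h j
      have hedge : treeRel ends S (ends (selF S h j)).out.1 (ends (selF S h j)).out.2 :=
        ⟨selF S h j, hS, sym2_out_spec _⟩
      by_cases hra : Relation.ReflTransGen (treeRel ends S) x₀ (ends (selF S h j)).out.1
      · have hrb := hra.tail hedge
        simp [hra, hrb]
      · have hrb : ¬ Relation.ReflTransGen (treeRel ends S) x₀ (ends (selF S h j)).out.2 :=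
          fun hrb => hra (hrb.tail (treeRel_symm ends S hedge))
        simp [hra, hrb]
    have hg0 : g ≠ 0 := by
      intro hc
      have h1 := congrFun hc ⟨x₀, hx₀v⟩
      rw [hgdef] at h1
      simp only [Pi.zero_apply] at h1
      rw [if_pos Relation.ReflTransGen.refl] at h1
      norm_num at h1
    rw [det_eq_zero_of_vecMul_eq_zero g hg0 hvec]
    norm_num

/-- Matrix–tree: the principal minor of the Laplacian counts spanning trees. -/
lemma minor_det (ends : E → Sym2 V) (v : V) [DecidablePred (IsSpanningTree ends)] :
    det ((Bm ends * (Bm ends)ᵀ).submatrix (Subtype.val : {x : V // x ≠ v} → V) Subtype.val)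
      = ((univ.filter (fun S => IsSpanningTree ends S)).card : ℝ) := by
  classical
  have hM : (Bm ends * (Bm ends)ᵀ).submatrix (Subtype.val : {x : V // x ≠ v} → V) Subtype.val
      = ((Bm ends).submatrix Subtype.val id) *
        ((Bm ends)ᵀ.submatrix id (Subtype.val : {x : V // x ≠ v} → V)) := by
    ext i j
    simp [Matrix.mul_apply, Matrix.submatrix_apply]
  rw [hM, cauchy_binet]
  have hterm : ∀ S : Finset E,
      (if h : S.card = Fintype.card {x : V // x ≠ v} then
        det (((Bm ends).submatrix Subtype.val id).submatrix id (selF S h)) *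
          det ((((Bm ends)ᵀ.submatrix id Subtype.val)).submatrix (selF S h) id) else 0)
      = (if IsSpanningTree ends S then (1 : ℝ) else 0) := by
    intro S
    by_cases h : S.card = Fintype.card {x : V // x ≠ v}
    · rw [dif_pos h]
      have h1 : ((Bm ends).submatrix (Subtype.val : {x : V // x ≠ v} → V) id).submatrix
          id (selF S h) = (Bm ends).submatrix Subtype.val (selF S h) := by
        rw [Matrix.submatrix_submatrix]
        rfl
      have h2 : (((Bm ends)ᵀ.submatrix id (Subtype.val : {x : V // x ≠ v} → V))).submatrix
          (selF S h) id = ((Bm ends).submatrix Subtype.val (selF S h))ᵀ := by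
        ext i j
        simp [Matrix.submatrix_apply, Matrix.transpose_apply]
      rw [h1, h2, Matrix.det_transpose, ← sq, det_sq_tree ends v S h]
    · rw [dif_neg h, if_neg]
      intro hT
      obtain ⟨hc1, -⟩ := hT
      apply h
      rw [card_ne v]
      omega
  rw [Finset.sum_congr rfl fun S _ => hterm S]
  rw [Finset.sum_boole]

/-- The minor is nonzero when the graph is connected. -/
lemma minor_det_ne_zero (ends : E → Sym2 V)
    (hconn : ∀ x y : V, Relation.ReflTransGen (treeRel ends (Finset.univ : Finset E)) x y)
    (v : V) :
    det ((Bm ends * (Bm ends)ᵀ).submatrix (Subtype.val : {x : V // x ≠ v} → V) Subtype.val)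
      ≠ 0 := by
  classical
  intro h0
  obtain ⟨g, hg, hMg⟩ := Matrix.exists_mulVec_eq_zero_iff.mpr h0
  set Bv := (Bm ends).submatrix (Subtype.val : {x : V // x ≠ v} → V) id with hBv
  have hM : (Bm ends * (Bm ends)ᵀ).submatrix (Subtype.val : {x : V // x ≠ v} → V) Subtype.val
      = Bv * Bvᵀ := by
    ext i j
    simp [Matrix.mul_apply, Matrix.submatrix_apply, hBv]
  rw [hM] at hMg
  have hq : dotProduct g ((Bv * Bvᵀ).mulVec g) = 0 := by
    rw [hMg, dotProduct_zero]
  rw [← Matrix.mulVec_mulVec, dotProduct_mulVec, Matrix.mulVec_transpose] at hq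
  have hqq : dotProduct (Matrix.vecMul g Bv) (Matrix.vecMul g Bv) = 0 := hq
  have hzero : Matrix.vecMul g Bv = 0 := by
    funext e
    have hnn : ∀ e' ∈ (univ : Finset E), 0 ≤ Matrix.vecMul g Bv e' * Matrix.vecMul g Bv e' :=
      fun e' _ => mul_self_nonneg _
    have := (Finset.sum_eq_zero_iff_of_nonneg hnn).mp hqq e (Finset.mem_univ e)
    exact mul_self_eq_zero.mp this
  have hcols : ∀ e ∈ (univ : Finset E), Gv v g (ends e).out.1 = Gv v g (ends e).out.2 := by
    intro e _
    have hcol := congrFun hzero e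
    simp only [Matrix.vecMul, dotProduct, Pi.zero_apply, hBv,
      Matrix.submatrix_apply, id_eq] at hcol
    rw [Gext_sum ends v g e] at hcol
    linarith
  have hconst : ∀ x y : V, Relation.ReflTransGen (treeRel ends univ) x y →
      Gv v g x = Gv v g y := fun x y hxy => const_of ends univ (Gv v g) hcols hxy
  apply hg
  funext i
  have h1 : Gv v g i.1 = 0 := by
    rw [hconst _ _ (hconn i.1 v)]
    simp [Gv]
  simpa [Gv, i.2] using h1

end Aux

open Matrix Polynomial in
theorem stmt1 {V E : Type*} [Fintype V] [Fintype E] [DecidableEq V] (ends : E → Sym2 V)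
    (hconn : ∀ x y : V, Relation.ReflTransGen (treeRel ends (Finset.univ : Finset E)) x y)
    (hdeg : ∀ x : V, 0 < mdeg ends x) :
    (treeCount ends : ℂ) =
      ((∏ x : V, (mdeg ends x : ℂ)) / (∑ x : V, (mdeg ends x : ℂ))) *
        detPrime (1 - transMat ends) := by
  classical
  rcases isEmpty_or_nonempty V with hVe | hV
  · have h1 : treeCount ends = 0 := by
      have he : IsEmpty {T : Finset E // IsSpanningTree ends T} := by
        constructor
        rintro ⟨T, hT⟩
        have h2 := hT.1
        rw [Fintype.card_eq_zero] at h2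
        omega
      rw [treeCount, Nat.card_of_isEmpty]
    rw [h1, show (∑ x : V, (mdeg ends x : ℂ)) = 0 by simp, div_zero, zero_mul]
    simp
  · letI : DecidableEq E := Classical.decEq E
    letI : DecidablePred (IsSpanningTree ends) := Classical.decPred _
    have hd : ∀ x : V, ((mdeg ends x : ℝ)) ≠ 0 := fun x => Nat.cast_ne_zero.mpr (hdeg x).ne'
    set L := Bm ends * (Bm ends)ᵀ with hL
    set N := 1 - transMat ends with hNdef
    have hNL : N = Matrix.of fun x y => ((mdeg ends x : ℝ))⁻¹ * L x y := oneSubP ends hdeg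
    set τ : ℕ := (univ.filter (fun S => IsSpanningTree ends S)).card with hτ
    have htree : treeCount ends = τ := by
      rw [treeCount, Nat.card_eq_fintype_card, hτ, Fintype.card_subtype]
    have hcofL : ∀ v : V, cof L v = (τ : ℝ) := by
      intro v
      rw [cof_eq_det_minor, hL, minor_det ends v]
    have hτpos : τ ≠ 0 := by
      have v : V := Classical.arbitrary V
      intro hc
      apply minor_det_ne_zero ends hconn v
      rw [minor_det ends v, ← hτ, hc]
      norm_num
    have hcofN : ∀ v : V, cof N v = (∏ x ∈ univ.erase v, ((mdeg ends x : ℝ))⁻¹) * (τ : ℝ) := by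
      intro v
      rw [hNL, cof_smul_rows, hcofL]
    have hco : (Matrix.charpoly N).coeff 1
        = (-1 : ℝ) ^ (Fintype.card V - 1) *
          ((τ : ℝ) * ∑ v : V, ∏ x ∈ univ.erase v, ((mdeg ends x : ℝ))⁻¹) := by
      rw [charpoly_coeff_one]
      rw [Finset.sum_congr rfl fun v _ => by rw [cof_neg N v, hcofN v]]
      rw [← Finset.mul_sum, ← Finset.sum_mul]
      ring
    have hdetN : Matrix.det N = 0 := by
      apply Matrix.exists_mulVec_eq_zero_iff.mp
      refine ⟨fun _ => 1, ?_, ?_⟩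
      · intro hc
        have := congrFun hc (Classical.arbitrary V)
        norm_num at this
      · funext x
        simp only [Matrix.mulVec, dotProduct, mul_one, Pi.zero_apply]
        rw [Finset.sum_congr rfl fun y _ => show N x y = ((mdeg ends x : ℝ))⁻¹ * L x y by
          rw [hNL]; rfl]
        rw [← Finset.mul_sum, hL, rowsum_L, mul_zero]
    -- complex part
    set pC := (N.map Complex.ofReal).charpoly with hpC
    have hpmap : pC = (Matrix.charpoly N).map (Complex.ofRealHom) := by
      rw [hpC, show N.map Complex.ofReal = N.map (Complex.ofRealHom : ℝ →+* ℂ) from rfl]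
      exact Matrix.charpoly_map N Complex.ofRealHom
    have hmonic : pC.Monic := Matrix.charpoly_monic _
    have hpne : pC ≠ 0 := hmonic.ne_zero
    have hsplit : pC.Splits := IsAlgClosed.splits pC
    have hcard : Multiset.card pC.roots = Fintype.card V := by
      have h1 := hsplit.natDegree_eq_card_roots
      rw [← h1, hpC, Matrix.charpoly_natDegree_eq_dim]
    have hc0 : pC.coeff 0 = 0 := by
      have hdC : (N.map Complex.ofReal).det = 0 := by
        rw [show N.map Complex.ofReal = Complex.ofRealHom.mapMatrix N from rfl]
        rw [← RingHom.map_det, hdetN]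
        simp
      have h2 := Matrix.det_eq_sign_charpoly_coeff (N.map Complex.ofReal)
      rw [hdC] at h2
      have h3 : ((-1 : ℂ)) ^ (Fintype.card V) ≠ 0 := pow_ne_zero _ (by norm_num)
      exact ((mul_eq_zero.mp h2.symm).resolve_left h3)
    have hroot0 : (0 : ℂ) ∈ pC.roots := by
      rw [Polynomial.mem_roots']
      exact ⟨hpne, by rwa [Polynomial.IsRoot, ← Polynomial.coeff_zero_eq_eval_zero]⟩
    have hcoeff1 : pC.coeff 1 = ((Matrix.charpoly N).coeff 1 : ℂ) := by
      rw [hpmap, Polynomial.coeff_map]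
      rfl
    have hsum_pos : 0 < ∑ v : V, ∏ x ∈ univ.erase v, ((mdeg ends x : ℝ))⁻¹ := by
      refine Finset.sum_pos (fun v _ => Finset.prod_pos fun x _ => ?_) univ_nonempty
      exact inv_pos.mpr (by exact_mod_cast hdeg x)
    have hcoeff1ne : pC.coeff 1 ≠ 0 := by
      rw [hcoeff1, hco]
      refine Complex.ofReal_ne_zero.mpr ?_
      refine mul_ne_zero (pow_ne_zero _ (by norm_num)) (mul_ne_zero ?_ hsum_pos.ne')
      exact_mod_cast hτpos
    have hcount : pC.roots.count 0 = 1 := by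
      rw [Polynomial.count_roots]
      have hge : 0 < pC.rootMultiplicity 0 := (Polynomial.rootMultiplicity_pos hpne).mpr
        (by rwa [Polynomial.IsRoot, ← Polynomial.coeff_zero_eq_eval_zero])
      have hle : pC.rootMultiplicity 0 ≤ 1 := by
        rw [Polynomial.rootMultiplicity_le_iff hpne]
        rintro ⟨t, ht⟩
        apply hcoeff1ne
        rw [ht, Polynomial.C_0, sub_zero, mul_comm, Polynomial.coeff_mul_X_pow']
        norm_num
      omega
    set R₀ := pC.roots.erase 0 with hR₀
    have hconsR : pC.roots = 0 ::ₘ R₀ := (Multiset.cons_erase hroot0).symm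
    have hR₀0 : (0 : ℂ) ∉ R₀ := by
      rw [← Multiset.count_eq_zero, hR₀, Multiset.count_erase_self, hcount]
    have hdp : detPrime (1 - transMat ends) = R₀.prod := by
      rw [detPrime]
      rw [show ((1 - transMat ends).map Complex.ofReal).charpoly = pC from rfl]
      rw [hconsR, Multiset.filter_cons_of_neg _ (by simp)]
      have hfil : ∀ a ∈ R₀, a ≠ 0 := fun a ha h0 => hR₀0 (by rwa [h0] at ha)
      rw [Multiset.filter_eq_self.mpr hfil]
    have hcard0 : Multiset.card R₀ = Fintype.card V - 1 := by
      rw [hR₀, Multiset.card_erase_of_mem hroot0, hcard]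
      rfl
    have hfact : pC = Polynomial.X * (R₀.map (fun a => Polynomial.X - Polynomial.C a)).prod := by
      conv_lhs => rw [hsplit.eq_prod_roots_of_monic hmonic]
      rw [hconsR, Multiset.map_cons, Multiset.prod_cons, Polynomial.C_0, sub_zero]
    have hc1R : pC.coeff 1 = (-1 : ℂ) ^ (Fintype.card V - 1) * R₀.prod := by
      rw [hfact, Polynomial.coeff_X_mul, Polynomial.coeff_zero_eq_eval_zero,
        Polynomial.eval_multiset_prod, Multiset.map_map]
      have hmc : ∀ a ∈ R₀, (Polynomial.eval 0 ∘ fun a => Polynomial.X - Polynomial.C a) a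
          = Neg.neg a := fun a _ => by simp
      rw [Multiset.map_congr rfl hmc, Multiset.prod_map_neg, hcard0]
    have hRprod : R₀.prod = (-1 : ℂ) ^ (Fintype.card V - 1) * pC.coeff 1 := by
      rw [hc1R, ← mul_assoc, ← mul_pow]
      norm_num
    rw [htree, hdp, hRprod, hcoeff1, hco]
    push_cast
    have hsne : (∑ x : V, (mdeg ends x : ℂ)) ≠ 0 := by
      rw [← Nat.cast_sum, Nat.cast_ne_zero]
      exact (Finset.sum_pos (fun x _ => hdeg x) univ_nonempty).ne'
    have hdCne : ∀ x : V, (mdeg ends x : ℂ) ≠ 0 := fun x =>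
      Nat.cast_ne_zero.mpr (hdeg x).ne'
    have hprodne : (∏ x : V, (mdeg ends x : ℂ)) ≠ 0 :=
      Finset.prod_ne_zero_iff.mpr fun x _ => hdCne x
    have hkey : (∑ v : V, ∏ x ∈ univ.erase v, ((mdeg ends x : ℂ))⁻¹) *
        (∏ x : V, (mdeg ends x : ℂ)) = ∑ x : V, (mdeg ends x : ℂ) := by
      rw [Finset.sum_mul]
      refine Finset.sum_congr rfl fun v _ => ?_
      rw [← Finset.mul_prod_erase univ _ (Finset.mem_univ v)]
      rw [Finset.prod_inv_distrib]
      have hne : (∏ x ∈ univ.erase v, (mdeg ends x : ℂ)) ≠ 0 :=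
        Finset.prod_ne_zero_iff.mpr fun x _ => hdCne x
      field_simp
    have hsign : ((-1 : ℂ) ^ (Fintype.card V - 1)) * ((-1 : ℂ) ^ (Fintype.card V - 1)) = 1 := by
      rw [← mul_pow]
      norm_num
    rw [← mul_assoc ((-1 : ℂ) ^ (Fintype.card V - 1)), hsign, one_mul]
    rw [div_mul_eq_mul_div, eq_div_iff hsne]
    linear_combination (-1 : ℂ) * (τ : ℂ) * hkey
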